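/- Let n ≥ 3 and let G be an n-vertex Hamiltonian graph with m edges in which no two cycles have the same length. Then the number k = m - n of chords (edges outside a fixed Hamiltonian cycle) satisfies C(k,2) < n, where C(k,2) is the binomial coefficient k choose 2. -/

import Mathlib

/-- The cycle `C_n` on vertex set `Fin n`, where label `i` represents the integer `i + 1`;
edges join consecutive integers mod `n` (i.e. `{i, i+1}` for `1 ≤ i ≤ n - 1` and `{n, 1}`). -/
def cycG (n : ℕ) : SimpleGraph (Fin n) :=
  SimpleGraph.fromRel (fun i j => (i.val + 1) % n = j.val)

/-- The graph `G_n(S)`: the cycle `C_n` together with a chord `{1, a}` for each `a ∈ S`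
(vertex label `i` represents the integer `i + 1`, so the integer vertex `1` is label `0`
and the integer vertex `a` is label `a - 1`). -/
def GnS (n : ℕ) (S : Finset ℕ) : SimpleGraph (Fin n) :=
  SimpleGraph.fromRel (fun i j => (i.val + 1) % n = j.val ∨ (i.val = 0 ∧ j.val + 1 ∈ S))

/-- A graph on a finite vertex type is Hamiltonian if it has a cycle through all vertices,
i.e. a cycle whose length equals the number of vertices. -/
def IsHamiltonianGraph {V : Type*} [Fintype V] (G : SimpleGraph V) : Prop :=
  ∃ (u : V) (p : G.Walk u u), p.IsCycle ∧ p.length = Fintype.card V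

/-- No two cycles of `G` have the same length: any two cycles with equal length are the same
cycle, i.e. have the same edge set. -/
def NoRepeatedCycleLength {V : Type*} (G : SimpleGraph V) : Prop :=
  ∀ (u v : V) (p : G.Walk u u) (q : G.Walk v v),
    p.IsCycle → q.IsCycle → p.length = q.length →
      {e | e ∈ p.edges} = {e | e ∈ q.edges}

open SimpleGraph

section AuxChordCycles
variable {V : Type*} {G : SimpleGraph V} {x y : V}

def ascWalk (σ : ℕ → V) (H : ∀ i, G.Adj (σ i) (σ (i+1))) : (len a : ℕ) → G.Walk (σ a) (σ (a + len))
  | 0, _ => SimpleGraph.Walk.nil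
  | (len+1), a =>
      (SimpleGraph.Walk.cons (H a) (ascWalk σ H len (a+1))).copy rfl (congrArg σ (by omega))

lemma ascWalk_support (σ : ℕ → V) (H : ∀ i, G.Adj (σ i) (σ (i+1))) (len a : ℕ) :
    (ascWalk σ H len a).support = (List.range' a (len+1)).map σ := by
  induction len generalizing a with
  | zero => simp [ascWalk]
  | succ l ih =>
      rw [List.range'_succ]
      simp [ascWalk, ih (a+1)]

lemma ascWalk_edges (σ : ℕ → V) (H : ∀ i, G.Adj (σ i) (σ (i+1))) (len a : ℕ) :
    (ascWalk σ H len a).edges = (List.range' a len).map (fun i => s(σ i, σ (i+1))) := by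
  induction len generalizing a with
  | zero => simp [ascWalk]
  | succ l ih =>
      rw [List.range'_succ]
      simp [ascWalk, ih (a+1)]

def GoodCycle (G : SimpleGraph V) (pe : List (Sym2 V)) (e f : Sym2 V) : Prop :=
  ∃ (w : V) (C : G.Walk w w), C.IsCycle ∧ e ∈ C.edges ∧ f ∈ C.edges ∧
    ∀ x ∈ C.edges, x = e ∨ x = f ∨ x ∈ pe

lemma GoodCycle.comm {pe : List (Sym2 V)} {e f : Sym2 V} (h : GoodCycle G pe e f) :
    GoodCycle G pe f e := by
  obtain ⟨w, C, h1, h2, h3, h4⟩ := h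
  exact ⟨w, C, h1, h3, h2, fun x hx => by rcases h4 x hx with h|h|h <;> tauto⟩

variable {σ : ℕ → V} {n : ℕ} {pe : List (Sym2 V)}

lemma sym2_sigma_eq (Hinj : ∀ i j, i < n → j < n → σ i = σ j → i = j)
    {a b c d : ℕ} (ha : a < n) (hb : b < n) (hc : c < n) (hd : d < n) :
    s(σ a, σ b) = s(σ c, σ d) ↔ ((a = c ∧ b = d) ∨ (a = d ∧ b = c)) := by
  rw [Sym2.eq_iff]
  constructor
  · rintro (⟨h1, h2⟩ | ⟨h1, h2⟩)
    · exact Or.inl ⟨Hinj _ _ ha hc h1, Hinj _ _ hb hd h2⟩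
    · exact Or.inr ⟨Hinj _ _ ha hd h1, Hinj _ _ hb hc h2⟩
  · rintro (⟨rfl, rfl⟩ | ⟨rfl, rfl⟩)
    · left; exact ⟨rfl, rfl⟩
    · right; exact ⟨rfl, rfl⟩

lemma sharedCase (Hedge : ∀ i, s(σ i, σ (i+1)) ∈ pe)
    (HG : ∀ x ∈ pe, x ∈ G.edgeSet)
    (Hinj : ∀ i j, i < n → j < n → σ i = σ j → i = j)
    (q1 q2 : ℕ) (h1 : 0 < q1) (h12 : q1 < q2) (h2 : q2 < n)
    (he : G.Adj (σ 0) (σ q1)) (hf : G.Adj (σ 0) (σ q2)) :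
    GoodCycle G pe s(σ 0, σ q1) s(σ 0, σ q2) := by
  have hn : 0 < n := by omega
  have Hadj : ∀ i, G.Adj (σ i) (σ (i+1)) := fun i => (G.mem_edgeSet).mp (HG _ (Hedge i))
  let A : G.Walk (σ q1) (σ q2) := (ascWalk σ Hadj (q2 - q1) q1).copy rfl (congrArg σ (by omega))
  let P : G.Walk (σ 0) (σ q2) := SimpleGraph.Walk.cons he A
  have hPsup : P.support = σ 0 :: (List.range' q1 (q2 - q1 + 1)).map σ := by
    simp [P, A, ascWalk_support]
  have hPedges : P.edges
      = s(σ 0, σ q1) :: (List.range' q1 (q2 - q1)).map (fun i => s(σ i, σ (i+1))) := by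
    simp [P, A, ascWalk_edges]
  have hpath : P.IsPath := by
    rw [SimpleGraph.Walk.isPath_def, hPsup]
    refine List.nodup_cons.mpr ⟨?_, ?_⟩
    · intro hmem
      obtain ⟨i, hi, hieq⟩ := List.mem_map.mp hmem
      simp only [List.mem_range'_1] at hi
      have := Hinj i 0 (by omega) (by omega) hieq
      omega
    · refine List.Nodup.map_on ?_ (List.nodup_range' 1 (by omega))
      intro i hi j hj hij
      simp only [List.mem_range'_1] at hi hj
      exact Hinj i j (by omega) (by omega) hij
  have hclose : s(σ q2, σ 0) ∉ P.edges := by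
    rw [hPedges]
    intro hmem
    rcases List.mem_cons.mp hmem with h | h
    · rw [sym2_sigma_eq Hinj (by omega) (by omega) (by omega) (by omega)] at h
      omega
    · obtain ⟨i, hi, hieq⟩ := List.mem_map.mp h
      simp only [List.mem_range'_1] at hi
      rw [sym2_sigma_eq Hinj (by omega) (by omega) (by omega) (by omega)] at hieq
      omega
  refine ⟨σ q2, SimpleGraph.Walk.cons hf.symm P,
    (SimpleGraph.Walk.cons_isCycle_iff P hf.symm).mpr ⟨hpath, hclose⟩, ?_, ?_, ?_⟩
  · rw [SimpleGraph.Walk.edges_cons, hPedges]; simp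
  · rw [SimpleGraph.Walk.edges_cons]
    exact List.mem_cons.mpr (Or.inl (Sym2.eq_swap).symm)
  · intro x hx
    rw [SimpleGraph.Walk.edges_cons, hPedges] at hx
    rcases List.mem_cons.mp hx with h | h
    · right; left; rw [h]; exact Sym2.eq_swap
    · rcases List.mem_cons.mp h with h | h
      · left; exact h
      · obtain ⟨i, _, hieq⟩ := List.mem_map.mp h
        right; right; rw [← hieq]; exact Hedge i


lemma nodup_two_ranges {a1 l1 a2 l2 : ℕ} (h : a1 + l1 ≤ a2)
    (Hinj : ∀ i j, i < n → j < n → σ i = σ j → i = j) (hb : a2 + l2 ≤ n) :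
    ((List.range' a1 l1 ++ List.range' a2 l2).map σ).Nodup := by
  refine List.Nodup.map_on ?_ ?_
  · intro i hi j hj hij
    simp only [List.mem_append, List.mem_range'_1] at hi hj
    refine Hinj i j (by omega) (by omega) hij
  · refine List.Nodup.append (List.nodup_range' 1 (by omega)) (List.nodup_range' 1 (by omega)) ?_
    intro x hx hx'
    simp only [List.mem_range'_1] at hx hx'
    omega


lemma nestedCase (Hedge : ∀ i, s(σ i, σ (i+1)) ∈ pe)
    (HG : ∀ x ∈ pe, x ∈ G.edgeSet)
    (Hinj : ∀ i j, i < n → j < n → σ i = σ j → i = j)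
    (q1 q2 q3 : ℕ) (h1 : 0 < q1) (h12 : q1 < q2) (h23 : q2 < q3) (h3 : q3 < n)
    (he : G.Adj (σ 0) (σ q3)) (hf : G.Adj (σ q1) (σ q2)) :
    GoodCycle G pe s(σ 0, σ q3) s(σ q1, σ q2) := by
  have Hadj : ∀ i, G.Adj (σ i) (σ (i+1)) := fun i => (G.mem_edgeSet).mp (HG _ (Hedge i))
  let A1 : G.Walk (σ 0) (σ q1) := (ascWalk σ Hadj q1 0).copy rfl (congrArg σ (by omega))
  let A2 : G.Walk (σ q2) (σ q3) := (ascWalk σ Hadj (q3 - q2) q2).copy rfl (congrArg σ (by omega))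
  let P : G.Walk (σ 0) (σ q3) := A1.append (SimpleGraph.Walk.cons hf A2)
  have hPsup : P.support
      = ((List.range' 0 (q1+1)) ++ (List.range' q2 (q3 - q2 + 1))).map σ := by
    simp [P, A1, A2, SimpleGraph.Walk.support_append, ascWalk_support]
  have hPedges : P.edges
      = ((List.range' 0 q1).map (fun i => s(σ i, σ (i+1))) ++
          (s(σ q1, σ q2) :: (List.range' q2 (q3 - q2)).map (fun i => s(σ i, σ (i+1))))) := by
    simp [P, A1, A2, SimpleGraph.Walk.edges_append, ascWalk_edges]
  have hpath : P.IsPath := by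
    rw [SimpleGraph.Walk.isPath_def, hPsup]
    exact nodup_two_ranges (by omega) Hinj (by omega)
  have hclose : s(σ q3, σ 0) ∉ P.edges := by
    rw [hPedges]
    intro hmem
    rcases List.mem_append.mp hmem with h | h
    · obtain ⟨i, hi, hieq⟩ := List.mem_map.mp h
      simp only [List.mem_range'_1] at hi
      rw [sym2_sigma_eq Hinj (by omega) (by omega) (by omega) (by omega)] at hieq
      omega
    · rcases List.mem_cons.mp h with h | h
      · rw [sym2_sigma_eq Hinj (by omega) (by omega) (by omega) (by omega)] at h
        omega
      · obtain ⟨i, hi, hieq⟩ := List.mem_map.mp h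
        simp only [List.mem_range'_1] at hi
        rw [sym2_sigma_eq Hinj (by omega) (by omega) (by omega) (by omega)] at hieq
        omega
  refine ⟨σ q3, SimpleGraph.Walk.cons he.symm P,
    (SimpleGraph.Walk.cons_isCycle_iff P he.symm).mpr ⟨hpath, hclose⟩, ?_, ?_, ?_⟩
  · rw [SimpleGraph.Walk.edges_cons]
    exact List.mem_cons.mpr (Or.inl (Sym2.eq_swap).symm)
  · rw [SimpleGraph.Walk.edges_cons, hPedges]; simp
  · intro x hx
    rw [SimpleGraph.Walk.edges_cons, hPedges] at hx
    rcases List.mem_cons.mp hx with h | h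
    · left; rw [h]; exact Sym2.eq_swap
    · rcases List.mem_append.mp h with h | h
      · obtain ⟨i, _, hieq⟩ := List.mem_map.mp h
        right; right; rw [← hieq]; exact Hedge i
      · rcases List.mem_cons.mp h with h | h
        · right; left; exact h
        · obtain ⟨i, _, hieq⟩ := List.mem_map.mp h
          right; right; rw [← hieq]; exact Hedge i


lemma seqCase (Hedge : ∀ i, s(σ i, σ (i+1)) ∈ pe)
    (HG : ∀ x ∈ pe, x ∈ G.edgeSet)
    (Hinj : ∀ i j, i < n → j < n → σ i = σ j → i = j)
    (Hn : σ n = σ 0)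
    (q1 q2 q3 : ℕ) (h1 : 0 < q1) (h12 : q1 < q2) (h23 : q2 < q3) (h3 : q3 < n)
    (he : G.Adj (σ 0) (σ q1)) (hf : G.Adj (σ q2) (σ q3)) :
    GoodCycle G pe s(σ 0, σ q1) s(σ q2, σ q3) := by
  have Hadj : ∀ i, G.Adj (σ i) (σ (i+1)) := fun i => (G.mem_edgeSet).mp (HG _ (Hedge i))
  have hcladj : G.Adj (σ (n-1)) (σ 0) := by
    have := Hadj (n-1)
    rwa [show (n-1)+1 = n by omega, Hn] at this
  have hclpe : s(σ (n-1), σ 0) ∈ pe := by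
    have := Hedge (n-1)
    rwa [show (n-1)+1 = n by omega, Hn] at this
  let A1 : G.Walk (σ q1) (σ q2) := (ascWalk σ Hadj (q2 - q1) q1).copy rfl (congrArg σ (by omega))
  let A2 : G.Walk (σ q3) (σ (n-1)) :=
    (ascWalk σ Hadj (n - 1 - q3) q3).copy rfl (congrArg σ (by omega))
  let P : G.Walk (σ 0) (σ (n-1)) :=
    SimpleGraph.Walk.cons he (A1.append (SimpleGraph.Walk.cons hf A2))
  have hPsup : P.support
      = ((0 :: (List.range' q1 (q2 - q1 + 1) ++ List.range' q3 (n - 1 - q3 + 1))).map σ) := by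
    simp [P, A1, A2, SimpleGraph.Walk.support_append, ascWalk_support]
  have hPedges : P.edges
      = s(σ 0, σ q1) :: ((List.range' q1 (q2 - q1)).map (fun i => s(σ i, σ (i+1))) ++
          (s(σ q2, σ q3) :: (List.range' q3 (n - 1 - q3)).map (fun i => s(σ i, σ (i+1))))) := by
    simp [P, A1, A2, SimpleGraph.Walk.edges_append, ascWalk_edges]
  have hpath : P.IsPath := by
    rw [SimpleGraph.Walk.isPath_def, hPsup]
    refine List.Nodup.map_on ?_ ?_
    · intro i hi j hj hij
      simp only [List.mem_cons, List.mem_append, List.mem_range'_1] at hi hj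
      refine Hinj i j (by omega) (by omega) hij
    · refine List.nodup_cons.mpr ⟨?_, ?_⟩
      · simp only [List.mem_append, List.mem_range'_1]; omega
      · refine List.Nodup.append (List.nodup_range' 1 (by omega)) (List.nodup_range' 1 (by omega)) ?_
        intro x hx hx'
        simp only [List.mem_range'_1] at hx hx'
        omega
  have hclose : s(σ (n-1), σ 0) ∉ P.edges := by
    rw [hPedges]
    intro hmem
    rcases List.mem_cons.mp hmem with h | h
    · rw [sym2_sigma_eq Hinj (by omega) (by omega) (by omega) (by omega)] at h
      omega
    · rcases List.mem_append.mp h with h | h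
      · obtain ⟨i, hi, hieq⟩ := List.mem_map.mp h
        simp only [List.mem_range'_1] at hi
        rw [sym2_sigma_eq Hinj (by omega) (by omega) (by omega) (by omega)] at hieq
        omega
      · rcases List.mem_cons.mp h with h | h
        · rw [sym2_sigma_eq Hinj (by omega) (by omega) (by omega) (by omega)] at h
          omega
        · obtain ⟨i, hi, hieq⟩ := List.mem_map.mp h
          simp only [List.mem_range'_1] at hi
          rw [sym2_sigma_eq Hinj (by omega) (by omega) (by omega) (by omega)] at hieq
          omega
  refine ⟨σ (n-1), SimpleGraph.Walk.cons hcladj P,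
    (SimpleGraph.Walk.cons_isCycle_iff P hcladj).mpr ⟨hpath, hclose⟩, ?_, ?_, ?_⟩
  · rw [SimpleGraph.Walk.edges_cons, hPedges]; simp
  · rw [SimpleGraph.Walk.edges_cons, hPedges]; simp
  · intro x hx
    rw [SimpleGraph.Walk.edges_cons, hPedges] at hx
    rcases List.mem_cons.mp hx with h | h
    · right; right; rw [h]; exact hclpe
    · rcases List.mem_cons.mp h with h | h
      · left; exact h
      · rcases List.mem_append.mp h with h | h
        · obtain ⟨i, _, hieq⟩ := List.mem_map.mp h
          right; right; rw [← hieq]; exact Hedge i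
        · rcases List.mem_cons.mp h with h | h
          · right; left; exact h
          · obtain ⟨i, _, hieq⟩ := List.mem_map.mp h
            right; right; rw [← hieq]; exact Hedge i

lemma crossCase (Hedge : ∀ i, s(σ i, σ (i+1)) ∈ pe)
    (HG : ∀ x ∈ pe, x ∈ G.edgeSet)
    (Hinj : ∀ i j, i < n → j < n → σ i = σ j → i = j)
    (q1 q2 q3 : ℕ) (h1 : 0 < q1) (h12 : q1 < q2) (h23 : q2 < q3) (h3 : q3 < n)
    (he : G.Adj (σ 0) (σ q2)) (hf : G.Adj (σ q1) (σ q3)) :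
    GoodCycle G pe s(σ 0, σ q2) s(σ q1, σ q3) := by
  have Hadj : ∀ i, G.Adj (σ i) (σ (i+1)) := fun i => (G.mem_edgeSet).mp (HG _ (Hedge i))
  let A1 : G.Walk (σ 0) (σ q1) := (ascWalk σ Hadj q1 0).copy rfl (congrArg σ (by omega))
  let A2 : G.Walk (σ q3) (σ q2) :=
    ((ascWalk σ Hadj (q3 - q2) q2).copy rfl (congrArg σ (by omega))).reverse
  let P : G.Walk (σ 0) (σ q2) := A1.append (SimpleGraph.Walk.cons hf A2)
  have hPsup : P.support
      = ((List.range' 0 (q1+1)) ++ (List.range' q2 (q3 - q2 + 1)).reverse).map σ := by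
    simp [P, A1, A2, SimpleGraph.Walk.support_append, SimpleGraph.Walk.support_reverse,
      ascWalk_support, List.map_reverse]
  have hPedges : P.edges
      = ((List.range' 0 q1).map (fun i => s(σ i, σ (i+1))) ++
          (s(σ q1, σ q3) ::
            ((List.range' q2 (q3 - q2)).map (fun i => s(σ i, σ (i+1)))).reverse)) := by
    simp [P, A1, A2, SimpleGraph.Walk.edges_append, SimpleGraph.Walk.edges_reverse,
      ascWalk_edges, Nat.add_sub_cancel' h23.le]
  have hpath : P.IsPath := by
    rw [SimpleGraph.Walk.isPath_def, hPsup]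
    refine List.Nodup.map_on ?_ ?_
    · intro i hi j hj hij
      simp only [List.mem_append, List.mem_reverse, List.mem_range'_1] at hi hj
      refine Hinj i j (by omega) (by omega) hij
    · refine List.Nodup.append (List.nodup_range' 1 (by omega))
        (List.nodup_reverse.mpr (List.nodup_range' 1 (by omega))) ?_
      intro x hx hx'
      simp only [List.mem_reverse, List.mem_range'_1] at hx hx'
      omega
  have hclose : s(σ q2, σ 0) ∉ P.edges := by
    rw [hPedges]
    intro hmem
    rcases List.mem_append.mp hmem with h | h
    · obtain ⟨i, hi, hieq⟩ := List.mem_map.mp h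
      simp only [List.mem_range'_1] at hi
      rw [sym2_sigma_eq Hinj (by omega) (by omega) (by omega) (by omega)] at hieq
      omega
    · rcases List.mem_cons.mp h with h | h
      · rw [sym2_sigma_eq Hinj (by omega) (by omega) (by omega) (by omega)] at h
        omega
      · rw [List.mem_reverse] at h
        obtain ⟨i, hi, hieq⟩ := List.mem_map.mp h
        simp only [List.mem_range'_1] at hi
        rw [sym2_sigma_eq Hinj (by omega) (by omega) (by omega) (by omega)] at hieq
        omega
  refine ⟨σ q2, SimpleGraph.Walk.cons he.symm P,
    (SimpleGraph.Walk.cons_isCycle_iff P he.symm).mpr ⟨hpath, hclose⟩, ?_, ?_, ?_⟩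
  · rw [SimpleGraph.Walk.edges_cons]
    exact List.mem_cons.mpr (Or.inl (Sym2.eq_swap).symm)
  · rw [SimpleGraph.Walk.edges_cons, hPedges]; simp
  · intro x hx
    rw [SimpleGraph.Walk.edges_cons, hPedges] at hx
    rcases List.mem_cons.mp hx with h | h
    · left; rw [h]; exact Sym2.eq_swap
    · rcases List.mem_append.mp h with h | h
      · obtain ⟨i, _, hieq⟩ := List.mem_map.mp h
        right; right; rw [← hieq]; exact Hedge i
      · rcases List.mem_cons.mp h with h | h
        · right; left; exact h
        · rw [List.mem_reverse] at h
          obtain ⟨i, _, hieq⟩ := List.mem_map.mp h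
          right; right; rw [← hieq]; exact Hedge i


/-- rotate the labelling so that `x` sits at position `0`. -/
lemma rotate_setup (Hedge : ∀ i, s(σ i, σ (i+1)) ∈ pe)
    (Hinj : ∀ i j, i < n → j < n → σ i = σ j → i = j)
    (Hper : ∀ i, σ (i + n) = σ i)
    (Hsurj : ∀ v, ∃ q, q < n ∧ σ q = v)
    (hn : 0 < n) (x : V) :
    ∃ τ : ℕ → V, (∀ i, s(τ i, τ (i+1)) ∈ pe) ∧
      (∀ i j, i < n → j < n → τ i = τ j → i = j) ∧
      (τ n = τ 0) ∧ (τ 0 = x) ∧ (∀ v, ∃ q, q < n ∧ τ q = v) := by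
  obtain ⟨px, hpx, hpxe⟩ := Hsurj x
  refine ⟨fun i => σ (i + px), ?_, ?_, ?_, ?_, ?_⟩
  · intro i
    show s(σ (i + px), σ (i + 1 + px)) ∈ pe
    rw [show i + 1 + px = (i + px) + 1 from by omega]
    exact Hedge (i + px)
  · intro i j hi hj h
    have norm : ∀ k, k < n → ∃ k', k' < n ∧ σ (k + px) = σ k' ∧
        (k' = k + px ∨ k' + n = k + px) := by
      intro k hk
      by_cases hc : k + px < n
      · exact ⟨k + px, hc, rfl, Or.inl rfl⟩
      · refine ⟨k + px - n, by omega, ?_, Or.inr (by omega)⟩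
        have h2 := Hper (k + px - n)
        rw [show k + px - n + n = k + px from by omega] at h2
        exact h2
    obtain ⟨i', hi', hei, hci⟩ := norm i hi
    obtain ⟨j', hj', hej, hcj⟩ := norm j hj
    have := Hinj i' j' hi' hj' (by rw [← hei, ← hej]; exact h)
    omega
  · show σ (n + px) = σ (0 + px)
    rw [Nat.zero_add, Nat.add_comm, Hper px]
  · show σ (0 + px) = x
    rw [Nat.zero_add]; exact hpxe
  · intro v
    obtain ⟨pv, hpv, hpve⟩ := Hsurj v
    refine ⟨if px ≤ pv then pv - px else pv + n - px, by split <;> omega, ?_⟩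
    split
    · show σ (pv - px + px) = v
      rw [show pv - px + px = pv from by omega]; exact hpve
    · show σ (pv + n - px + px) = v
      rw [show pv + n - px + px = pv + n from by omega, Hper pv]; exact hpve

lemma pairAux (Hedge : ∀ i, s(σ i, σ (i+1)) ∈ pe)
    (HG : ∀ x ∈ pe, x ∈ G.edgeSet)
    (Hinj : ∀ i j, i < n → j < n → σ i = σ j → i = j)
    (Hsurj : ∀ v, ∃ q, q < n ∧ σ q = v)
    (hn : 0 < n) (y z : V)
    (hxy : G.Adj (σ 0) y) (hxz : G.Adj (σ 0) z) (hyz : y ≠ z) :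
    GoodCycle G pe s(σ 0, y) s(σ 0, z) := by
  obtain ⟨qy, hqy, rfl⟩ := Hsurj y
  obtain ⟨qz, hqz, rfl⟩ := Hsurj z
  have h0y : qy ≠ 0 := fun h => hxy.ne (by rw [h])
  have h0z : qz ≠ 0 := fun h => hxz.ne (by rw [h])
  have hyz' : qy ≠ qz := fun h => hyz (by rw [h])
  rcases Nat.lt_trichotomy qy qz with h | h | h
  · exact sharedCase Hedge HG Hinj qy qz (by omega) h hqz hxy hxz
  · omega
  · exact (sharedCase Hedge HG Hinj qz qy (by omega) h hqy hxz hxy).comm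

lemma pairDisjoint (Hedge : ∀ i, s(σ i, σ (i+1)) ∈ pe)
    (HG : ∀ x ∈ pe, x ∈ G.edgeSet)
    (Hinj : ∀ i j, i < n → j < n → σ i = σ j → i = j)
    (Hn : σ n = σ 0)
    (Hsurj : ∀ v, ∃ q, q < n ∧ σ q = v)
    (hn : 0 < n) (y z w : V)
    (hxy : G.Adj (σ 0) y) (hzw : G.Adj z w)
    (hxz : σ 0 ≠ z) (hxw : σ 0 ≠ w) (hyz : y ≠ z) (hyw : y ≠ w) :
    GoodCycle G pe s(σ 0, y) s(z, w) := by
  obtain ⟨a, ha, rfl⟩ := Hsurj y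
  obtain ⟨b, hb, rfl⟩ := Hsurj z
  obtain ⟨c, hc, rfl⟩ := Hsurj w
  have h0a : a ≠ 0 := fun h => hxy.ne (by rw [h])
  have h0b : b ≠ 0 := fun h => hxz (by rw [h])
  have h0c : c ≠ 0 := fun h => hxw (by rw [h])
  have hab : a ≠ b := fun h => hyz (by rw [h])
  have hac : a ≠ c := fun h => hyw (by rw [h])
  have hbc : b ≠ c := fun h => hzw.ne (by rw [h])
  have main : ∀ b' c' : ℕ, b' ≠ 0 → c' ≠ 0 → a ≠ b' → a ≠ c' → b' < c' → c' < n →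
      G.Adj (σ b') (σ c') → GoodCycle G pe s(σ 0, σ a) s(σ b', σ c') := by
    intro b' c' h0b' h0c' hab' hac' hbc' hc' hadj
    rcases Nat.lt_trichotomy a b' with h | h | h
    · exact seqCase Hedge HG Hinj Hn a b' c' (by omega) h hbc' hc' hxy hadj
    · omega
    · rcases Nat.lt_trichotomy a c' with h2 | h2 | h2
      · exact crossCase Hedge HG Hinj b' a c' (by omega) h h2 hc' hxy hadj
      · omega
      · exact nestedCase Hedge HG Hinj b' c' a (by omega) hbc' h2 ha hxy hadj
  rcases Nat.lt_trichotomy b c with h | h | h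
  · exact main b c h0b h0c hab hac h hc hzw
  · omega
  · rw [show s(σ b, σ c) = s(σ c, σ b) from Sym2.eq_swap]
    exact main c b h0c h0b hac hab h hb hzw.symm

lemma pairChords (Hedge : ∀ i, s(σ i, σ (i+1)) ∈ pe)
    (HG : ∀ x ∈ pe, x ∈ G.edgeSet)
    (Hinj : ∀ i j, i < n → j < n → σ i = σ j → i = j)
    (Hper : ∀ i, σ (i + n) = σ i)
    (Hsurj : ∀ v, ∃ q, q < n ∧ σ q = v)
    (hn : 0 < n) (e f : Sym2 V)
    (he : e ∈ G.edgeSet) (hf : f ∈ G.edgeSet) (hef : e ≠ f) :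
    GoodCycle G pe e f := by
  induction e using Sym2.ind with | _ x y =>
  induction f using Sym2.ind with | _ z w =>
  rw [SimpleGraph.mem_edgeSet] at he hf
  have setup : ∀ x' y' z' : V, G.Adj x' y' → G.Adj x' z' → y' ≠ z' →
      GoodCycle G pe s(x', y') s(x', z') := by
    intro x' y' z' h1 h2 h3
    obtain ⟨τ, He, Hi, _, h0, Hs⟩ := rotate_setup Hedge Hinj Hper Hsurj hn x'
    rw [← h0]
    exact pairAux He HG Hi Hs hn y' z' (h0 ▸ h1) (h0 ▸ h2) h3
  by_cases h1 : x = z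
  · subst h1
    exact setup x y w he hf (fun h => hef (by rw [h]))
  · by_cases h2 : x = w
    · subst h2
      rw [show s(z, x) = s(x, z) from Sym2.eq_swap]
      refine setup x y z he hf.symm (fun h => hef ?_)
      rw [h, Sym2.eq_swap]
    · by_cases h3 : y = z
      · subst h3
        rw [show s(x, y) = s(y, x) from Sym2.eq_swap]
        exact setup y x w he.symm hf h2
      · by_cases h4 : y = w
        · subst h4
          rw [show s(x, y) = s(y, x) from Sym2.eq_swap,
            show s(z, y) = s(y, z) from Sym2.eq_swap]
          exact setup y x z he.symm hf.symm h1
        · obtain ⟨τ, He, Hi, Hn', h0, Hs⟩ := rotate_setup Hedge Hinj Hper Hsurj hn x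
          rw [← h0]
          exact pairDisjoint He HG Hi Hn' Hs hn y z w (h0 ▸ he) hf
            (h0 ▸ h1) (h0 ▸ h2) h3 h4

lemma walk_getD_edge (w : G.Walk x y) (d : V) :
    ∀ j, j < w.length → s(w.support.getD j d, w.support.getD (j+1) d) ∈ w.edges := by
  induction w with
  | nil => intro j h; simp at h
  | @cons a b c h q ih =>
    intro j hj
    cases j with
    | zero =>
      simp only [SimpleGraph.Walk.support_cons, List.getD_cons_zero, List.getD_cons_succ,
        SimpleGraph.Walk.edges_cons]
      rw [q.support_eq_cons]
      simp
    | succ j' =>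
      simp only [SimpleGraph.Walk.support_cons, List.getD_cons_succ,
        SimpleGraph.Walk.edges_cons]
      exact List.mem_cons_of_mem _ (ih j' (by simpa using hj))

lemma walk_getD_length (w : G.Walk x y) (d : V) :
    w.support.getD w.length d = y := by
  induction w with
  | nil => simp
  | cons h q ih => simpa using ih

lemma exists_sigma [Fintype V] {u : V} (p : G.Walk u u) (hc : p.IsCycle)
    {n : ℕ} (hcard : Fintype.card V = n)
    (hlen : p.length = n) (hn : 3 ≤ n) :
    ∃ σ : ℕ → V, (∀ i, s(σ i, σ (i+1)) ∈ p.edges) ∧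
      (∀ i j, i < n → j < n → σ i = σ j → i = j) ∧
      (∀ i, σ (i + n) = σ i) ∧
      (∀ v, ∃ q, q < n ∧ σ q = v) := by
  classical
  set S := p.support with hS
  have hSlen : S.length = n + 1 := by
    rw [hS, SimpleGraph.Walk.length_support, hlen]
  have hSn : S.getD n u = u := by
    rw [hS, ← hlen]; exact walk_getD_length p u
  set T := S.tail with hT
  have hTlen : T.length = n := by
    rw [hT, List.length_tail, hSlen]; omega
  have hTnodup : T.Nodup := hc.2
  have hTget : ∀ (i : ℕ) (h : i < n), T[i]'(by omega) = S.getD (i+1) u := by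
    intro i h
    rw [List.getD_eq_getElem S u (by omega)]
    exact List.getElem_tail (by rw [← hT, hTlen]; omega)
  have hS0 : S.getD 0 u = u := by
    rw [hS, p.support_eq_cons]; simp
  have hTlast : T[n-1]'(by omega) = u := by
    rw [hTget (n-1) (by omega), show n - 1 + 1 = n from by omega, hSn]
  have key : ∀ i j, i < n → j < n → S.getD i u = S.getD j u → i < j → False := by
    intro i j hi hj h hij
    by_cases hi0 : i = 0
    · subst hi0
      rw [hS0] at h
      have hTj : T[j-1]'(by omega) = u := by
        rw [hTget (j-1) (by omega), show j - 1 + 1 = j from by omega]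
        exact h.symm
      have := (List.Nodup.getElem_inj_iff hTnodup).mp (hTj.trans hTlast.symm)
      omega
    · have h1 : T[i-1]'(by omega) = T[j-1]'(by omega) := by
        rw [hTget (i-1) (by omega), hTget (j-1) (by omega),
          show i - 1 + 1 = i from by omega, show j - 1 + 1 = j from by omega]
        exact h
      have := (List.Nodup.getElem_inj_iff hTnodup).mp h1
      omega
  refine ⟨fun i => S.getD (i % n) u, ?_, ?_, ?_, ?_⟩
  · intro i
    simp only
    have hj : i % n < n := Nat.mod_lt _ (by omega)
    have h1 : (i + 1) % n = (i % n + 1) % n := by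
      conv_lhs => rw [Nat.add_mod]
      rw [Nat.mod_eq_of_lt (show (1:ℕ) < n by omega)]
    have hmem := walk_getD_edge p u (i % n) (by rw [hlen]; omega)
    by_cases hcase : i % n + 1 < n
    · rw [h1, Nat.mod_eq_of_lt hcase]
      exact hmem
    · have hj1 : i % n + 1 = n := by omega
      rw [h1, hj1, Nat.mod_self, hS0]
      rw [hj1, hSn] at hmem
      exact hmem
  · intro i j hi hj h
    simp only [Nat.mod_eq_of_lt hi, Nat.mod_eq_of_lt hj] at h
    rcases Nat.lt_trichotomy i j with h' | h' | h'
    · exact absurd (key i j hi hj h h') (by simp)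
    · exact h'
    · exact absurd (key j i hj hi h.symm h') (by simp)
  · intro i
    simp only [Nat.add_mod_right]
  · intro v
    have hvT : v ∈ T := by
      have hcardT : T.toFinset.card = Fintype.card V := by
        rw [List.toFinset_card_of_nodup hTnodup, hTlen, hcard]
      have huniv : T.toFinset = Finset.univ := Finset.eq_univ_of_card _ hcardT
      have : v ∈ T.toFinset := huniv ▸ Finset.mem_univ v
      exact List.mem_toFinset.mp this
    obtain ⟨idx, hidx, hvidx⟩ := List.mem_iff_getElem.mp hvT
    by_cases hlt : idx + 1 < n
    · refine ⟨idx + 1, hlt, ?_⟩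
      simp only
      rw [Nat.mod_eq_of_lt hlt, ← hTget idx (by omega)]
      exact hvidx
    · have hidx' : idx = n - 1 := by rw [hTlen] at hidx; omega
      subst hidx'
      refine ⟨0, by omega, ?_⟩
      simp only [Nat.zero_mod, hS0]
      exact hTlast.symm.trans hvidx

lemma cycle_length_le [Fintype V] {w : V} {C : G.Walk w w} (h : C.IsCycle) :
    C.length ≤ Fintype.card V := by
  have h1 := h.support_nodup.length_le_card
  have h2 : C.support.tail.length = C.length := by
    rw [List.length_tail, SimpleGraph.Walk.length_support]
    omega
  omega

end AuxChordCycles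

/-- If `n ≥ 3` and `G` is an `n`-vertex Hamiltonian graph with `m` edges and no two cycles
of the same length, then the number `k = m - n` of chords (edges outside a Hamiltonian
cycle) satisfies `C(k, 2) < n`. -/
theorem stmt11 (n : ℕ) (hn : 3 ≤ n) (G : SimpleGraph (Fin n)) (m : ℕ)
    (hm : G.edgeSet.ncard = m) (hham : IsHamiltonianGraph G)
    (hnr : NoRepeatedCycleLength G) :
    Nat.choose (m - n) 2 < n := by
  classical
  obtain ⟨u, p, hc, hlen'⟩ := hham
  have hcard : Fintype.card (Fin n) = n := Fintype.card_fin n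
  have hlen : p.length = n := by rw [hlen', hcard]
  obtain ⟨σ, Hedge, Hinj, Hper, Hsurj⟩ := exists_sigma p hc hcard hlen hn
  set pe := p.edges with hpe
  have HG : ∀ x ∈ pe, x ∈ G.edgeSet := fun x hx => p.edges_subset_edgeSet hx
  have hpe_nodup : pe.Nodup := hc.isCircuit.isTrail.edges_nodup
  set pF : Finset (Sym2 (Fin n)) := pe.toFinset with hpFdef
  have hpF_card : pF.card = n := by
    rw [hpFdef, List.toFinset_card_of_nodup hpe_nodup, hpe, SimpleGraph.Walk.length_edges, hlen]
  set eF : Finset (Sym2 (Fin n)) := (Set.toFinite G.edgeSet).toFinset with heFdef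
  have hmF : eF.card = m := by
    rw [← hm, Set.ncard_eq_toFinset_card _ (Set.toFinite G.edgeSet)]
  have hsub : pF ⊆ eF := by
    intro x hx
    rw [heFdef, Set.Finite.mem_toFinset]
    exact HG x (by simpa [hpFdef] using hx)
  set cF := eF \ pF with hcFdef
  have hk : cF.card = m - n := by rw [hcFdef, Finset.card_sdiff_of_subset hsub, hmF, hpF_card]
  -- the set of pairs of chords
  set S2 := cF.powersetCard 2 with hS2def
  have hS2card : S2.card = Nat.choose (m - n) 2 := by
    rw [hS2def, Finset.card_powersetCard, hk]
  -- property of a pair: there is a cycle whose chord set is exactly the pair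
  set chordSet : Set (Sym2 (Fin n)) := {x | x ∈ G.edgeSet ∧ x ∉ pe} with hchord
  have hcF_coe : (↑cF : Set (Sym2 (Fin n))) = chordSet := by
    rw [hcFdef, Finset.coe_sdiff, heFdef, Set.Finite.coe_toFinset, hpFdef,
      List.coe_toFinset, hchord]
    ext x
    simp [Set.mem_diff]
  set P : Finset (Sym2 (Fin n)) → Prop :=
    fun s => ∃ z : Σ w : Fin n, G.Walk w w, z.2.IsCycle ∧
      ({x | x ∈ z.2.edges} ∩ chordSet = ↑s) with hPdef
  have hPs : ∀ s ∈ S2, P s := by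
    intro s hs
    rw [hS2def, Finset.mem_powersetCard] at hs
    obtain ⟨hsub', hcard2⟩ := hs
    obtain ⟨e, f, hef, rfl⟩ := Finset.card_eq_two.mp hcard2
    have he' : e ∈ chordSet := by
      rw [← hcF_coe]; exact hsub' (by simp)
    have hf' : f ∈ chordSet := by
      rw [← hcF_coe]; exact hsub' (by simp)
    obtain ⟨w, C, hC, heC, hfC, hall⟩ :=
      pairChords Hedge HG Hinj Hper Hsurj (by omega) e f he'.1 hf'.1 hef
    refine ⟨⟨w, C⟩, hC, ?_⟩
    ext x
    simp only [Set.mem_inter_iff, Set.mem_setOf_eq, Finset.coe_insert, Finset.coe_singleton,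
      Set.mem_insert_iff, Set.mem_singleton_iff]
    constructor
    · rintro ⟨hx1, hx2⟩
      rcases hall x hx1 with h | h | h
      · exact Or.inl h
      · exact Or.inr h
      · exact absurd h (by rw [hchord] at hx2; exact hx2.2)
    · rintro (rfl | rfl)
      · exact ⟨heC, he'⟩
      · exact ⟨hfC, hf'⟩
  have hbound : S2.card ≤ (Finset.Icc 3 n).card := by
    refine Finset.card_le_card_of_injOn
      (fun s => if h : P s then h.choose.2.length else 0) ?_ ?_
    · intro s hs
      have hP := hPs s hs
      simp only [dif_pos hP]
      obtain ⟨hcyc, _⟩ := hP.choose_spec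
      rw [Finset.mem_coe, Finset.mem_Icc]
      exact ⟨hcyc.three_le_length, (cycle_length_le hcyc).trans hcard.le⟩
    · intro s hs t ht hF
      have hPt := hPs t ht
      have hPss := hPs s hs
      simp only [dif_pos hPt, dif_pos hPss] at hF
      obtain ⟨hcycs, heqs⟩ := hPss.choose_spec
      obtain ⟨hcyct, heqt⟩ := hPt.choose_spec
      have := hnr _ _ _ _ hcycs hcyct hF
      apply Finset.coe_injective
      rw [← heqs, ← heqt, this]
  rw [hS2card] at hbound
  have : (Finset.Icc 3 n).card = n - 2 := by rw [Nat.card_Icc]; omega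
  omega
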